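/- For every x ∈ ℝ², every invertible real 2×2 matrix A, and every f ∈ L²(ℝ² × ℝ; ℂ), one has ∫_{ℝ²×ℝ} |(ρ₂[x,A]f)(ω, t)|² dω dt = ∫_{ℝ²×ℝ} |f(ω, t)|² dω dt. In particular ρ₂[x,A] is a unitary operator on L²(ℝ² × ℝ; ℂ). -/

import Mathlib

open MeasureTheory Matrix
open scoped ENNReal

noncomputable section

/-- `‖ω‖²`, the squared Euclidean norm of the row vector `ω`. -/
def nsq (ω : Fin 2 → ℝ) : ℝ := ω 0 ^ 2 + ω 1 ^ 2

/-- `u_{ω,A}` for a row vector `ω = (ω 0, ω 1)` and a matrix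
`A = [[a, b], [c, d]] = [[A 0 0, A 0 1], [A 1 0, A 1 1]]`. -/
def uu (ω : Fin 2 → ℝ) (A : Matrix (Fin 2) (Fin 2) ℝ) : ℝ :=
  ((A 0 0 * A 1 0 + A 0 1 * A 1 1) * (ω 0 ^ 2 - ω 1 ^ 2)
      - (A 0 0 ^ 2 + A 0 1 ^ 2 - A 1 0 ^ 2 - A 1 1 ^ 2) * (ω 0 * ω 1))
    / ((A 0 0 * ω 0 + A 1 0 * ω 1) ^ 2 + (A 0 1 * ω 0 + A 1 1 * ω 1) ^ 2)

/-- `v_{ω,A}`. -/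
def vv (ω : Fin 2 → ℝ) (A : Matrix (Fin 2) (Fin 2) ℝ) : ℝ :=
  ((A 0 0 * A 1 1 - A 0 1 * A 1 0) * (ω 0 ^ 2 + ω 1 ^ 2))
    / ((A 0 0 * ω 0 + A 1 0 * ω 1) ^ 2 + (A 0 1 * ω 0 + A 1 1 * ω 1) ^ 2)

/-- The operator `σ₂[x,A]` on functions of `(ω, ω₃) ∈ ℝ² × ℝ`:
`(σ₂[x,A]ξ)(ω, ω₃) = (|det A|·‖ω‖/‖ωA‖)·e^{2πi(ω·x + ω₃·u_{ω,A})}·ξ(ωA, ω₃·v_{ω,A})`. -/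
def sigma2 (x : Fin 2 → ℝ) (A : Matrix (Fin 2) (Fin 2) ℝ)
    (ξ : (Fin 2 → ℝ) × ℝ → ℂ) : (Fin 2 → ℝ) × ℝ → ℂ := fun p =>
  (((|A.det| * Real.sqrt (nsq p.1) / Real.sqrt (nsq (vecMul p.1 A))) : ℝ) : ℂ)
    * Complex.exp (((2 * Real.pi * (p.1 0 * x 0 + p.1 1 * x 1 + p.2 * uu p.1 A)) : ℝ) * Complex.I)
    * ξ (vecMul p.1 A, p.2 * vv p.1 A)

/-- The operator `ρ₂[x,A]` on functions of `(ω, t) ∈ ℝ² × ℝ`: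
`(ρ₂[x,A]f)(ω, t) = (‖ωA‖/‖ω‖)·e^{2πi ω·x}·f(ωA, (t − u_{ω,A})/v_{ω,A})`. -/
def rho2 (x : Fin 2 → ℝ) (A : Matrix (Fin 2) (Fin 2) ℝ)
    (f : (Fin 2 → ℝ) × ℝ → ℂ) : (Fin 2 → ℝ) × ℝ → ℂ := fun p =>
  (((Real.sqrt (nsq (vecMul p.1 A)) / Real.sqrt (nsq p.1)) : ℝ) : ℂ)
    * Complex.exp (((2 * Real.pi * (p.1 0 * x 0 + p.1 1 * x 1)) : ℝ) * Complex.I)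
    * f (vecMul p.1 A, (p.2 - uu p.1 A) / vv p.1 A)

lemma nsq_nonneg (ω : Fin 2 → ℝ) : 0 ≤ nsq ω := by unfold nsq; positivity

lemma nsq_pos {ω : Fin 2 → ℝ} (h : ω ≠ 0) : 0 < nsq ω := by
  rcases (nsq_nonneg ω).lt_or_eq with h' | h'
  · exact h'
  · exfalso; apply h
    have h0 : ω 0 ^ 2 + ω 1 ^ 2 = 0 := h'.symm
    have h1 : ω 0 = 0 ∧ ω 1 = 0 := by
      constructor <;> nlinarith [sq_nonneg (ω 0), sq_nonneg (ω 1)]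
    funext i
    fin_cases i <;> simp [h1.1, h1.2]

lemma nsq_vecMul (ω : Fin 2 → ℝ) (A : Matrix (Fin 2) (Fin 2) ℝ) :
    nsq (vecMul ω A) =
      (A 0 0 * ω 0 + A 1 0 * ω 1) ^ 2 + (A 0 1 * ω 0 + A 1 1 * ω 1) ^ 2 := by
  simp [nsq, vecMul, dotProduct, Fin.sum_univ_two]
  ring

lemma vecMul_ne_zero {ω : Fin 2 → ℝ} {A : Matrix (Fin 2) (Fin 2) ℝ}
    (hA : A.det ≠ 0) (hω : ω ≠ 0) : vecMul ω A ≠ 0 := by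
  intro h
  apply hω
  have := congrArg (fun z => vecMul z A⁻¹) h
  simpa [vecMul_vecMul, Matrix.mul_nonsing_inv A (isUnit_iff_ne_zero.2 hA)] using this

lemma vv_eq (ω : Fin 2 → ℝ) (A : Matrix (Fin 2) (Fin 2) ℝ) :
    vv ω A = A.det * nsq ω / nsq (vecMul ω A) := by
  rw [Matrix.det_fin_two, nsq_vecMul]; rfl

/-- substitution `t ↦ (t - b)/a` on `ℝ`. -/
lemma lintegral_comp_sub_div (h : ℝ → ℝ≥0∞) (hm : Measurable h) {a : ℝ} (ha : a ≠ 0) (b : ℝ) :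
    ∫⁻ t : ℝ, h ((t - b) / a) = ENNReal.ofReal |a| * ∫⁻ s : ℝ, h s := by
  have h1 : ∀ t : ℝ, (t - b) / a = (fun s : ℝ => s * a⁻¹) (t - b) := by
    intro t; simp [div_eq_mul_inv]
  simp_rw [h1]
  have h2 : (∫⁻ t : ℝ, h ((t - b) * a⁻¹)) = ∫⁻ s : ℝ, h (s * a⁻¹) :=
    (measurePreserving_sub_right volume b).lintegral_comp (hm.comp (measurable_mul_const a⁻¹))
  rw [h2]
  rw [← lintegral_map hm (measurable_mul_const a⁻¹),
    Real.map_volume_mul_right (inv_ne_zero ha), lintegral_smul_measure, inv_inv, smul_eq_mul]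

/-- linear substitution `ω ↦ ωA` on `ℝ²`. -/
lemma lintegral_comp_vecMul (g : (Fin 2 → ℝ) → ℝ≥0∞) (hg : Measurable g)
    {A : Matrix (Fin 2) (Fin 2) ℝ} (hA : A.det ≠ 0) :
    ∫⁻ ω : Fin 2 → ℝ, g (vecMul ω A) = ENNReal.ofReal |A.det|⁻¹ * ∫⁻ ω, g ω := by
  have hmeas : Measurable (toLin' Aᵀ) :=
    (Continuous.measurable (LinearMap.continuous_on_pi _))
  have h1 : ∀ ω, vecMul ω A = toLin' Aᵀ ω := by
    intro ω; rw [toLin'_apply, mulVec_transpose]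
  simp_rw [h1]
  rw [← lintegral_map hg hmeas,
    Real.map_matrix_volume_pi_eq_smul_volume_pi (by rwa [det_transpose]),
    lintegral_smul_measure, det_transpose, abs_inv, smul_eq_mul]

lemma measurable_uu (A : Matrix (Fin 2) (Fin 2) ℝ) : Measurable fun ω : Fin 2 → ℝ => uu ω A := by
  unfold uu
  fun_prop

lemma measurable_vv (A : Matrix (Fin 2) (Fin 2) ℝ) : Measurable fun ω : Fin 2 → ℝ => vv ω A := by
  unfold vv
  fun_prop

lemma measurable_vecMulA (A : Matrix (Fin 2) (Fin 2) ℝ) :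
    Measurable fun ω : Fin 2 → ℝ => vecMul ω A := by
  have h1 : ∀ ω, vecMul ω A = toLin' Aᵀ ω := by
    intro ω; rw [toLin'_apply, mulVec_transpose]
  simp_rw [h1]
  exact Continuous.measurable (LinearMap.continuous_on_pi _)

lemma measurable_nsq : Measurable nsq := by unfold nsq; fun_prop

lemma vv_ne_zero {ω : Fin 2 → ℝ} {A : Matrix (Fin 2) (Fin 2) ℝ}
    (hA : A.det ≠ 0) (hω : ω ≠ 0) : vv ω A ≠ 0 := by
  rw [vv_eq]
  exact div_ne_zero (mul_ne_zero hA (nsq_pos hω).ne') (nsq_pos (vecMul_ne_zero hA hω)).ne'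

lemma ae_ne_zero : ∀ᵐ ω : Fin 2 → ℝ, ω ≠ 0 := by
  refine ae_iff.2 ?_
  simpa using measure_singleton (0 : Fin 2 → ℝ)

lemma key_change (A : Matrix (Fin 2) (Fin 2) ℝ) (hA : A.det ≠ 0)
    (F : (Fin 2 → ℝ) × ℝ → ℝ≥0∞) (hF : Measurable F) :
    ∫⁻ p : (Fin 2 → ℝ) × ℝ, ENNReal.ofReal (nsq (vecMul p.1 A) / nsq p.1) *
        F (vecMul p.1 A, (p.2 - uu p.1 A) / vv p.1 A)
      = ∫⁻ p : (Fin 2 → ℝ) × ℝ, F p := by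
  have hω := measurable_vecMulA A
  have hT : Measurable (fun p : (Fin 2 → ℝ) × ℝ =>
      ((vecMul p.1 A, (p.2 - uu p.1 A) / vv p.1 A) : (Fin 2 → ℝ) × ℝ)) :=
    (hω.comp measurable_fst).prodMk
      ((measurable_snd.sub ((measurable_uu A).comp measurable_fst)).div
        ((measurable_vv A).comp measurable_fst))
  have hc : Measurable fun p : (Fin 2 → ℝ) × ℝ =>
      ENNReal.ofReal (nsq (vecMul p.1 A) / nsq p.1) :=
    (((measurable_nsq.comp hω).comp measurable_fst).div
      (measurable_nsq.comp measurable_fst)).ennreal_ofReal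
  have hI : Measurable fun p : (Fin 2 → ℝ) × ℝ =>
      ENNReal.ofReal (nsq (vecMul p.1 A) / nsq p.1) *
        F (vecMul p.1 A, (p.2 - uu p.1 A) / vv p.1 A) := hc.mul (hF.comp hT)
  set G : (Fin 2 → ℝ) → ℝ≥0∞ := fun ω' => ∫⁻ s : ℝ, F (ω', s) with hGdef
  have hG : Measurable G := hF.lintegral_prod_right'
  rw [MeasureTheory.Measure.volume_eq_prod, lintegral_prod _ hI.aemeasurable, lintegral_prod _ hF.aemeasurable]
  have step1 : ∫⁻ ω : Fin 2 → ℝ, (∫⁻ t : ℝ,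
      ENNReal.ofReal (nsq (vecMul ω A) / nsq ω) * F (vecMul ω A, (t - uu ω A) / vv ω A))
      = ∫⁻ ω : Fin 2 → ℝ, ENNReal.ofReal |A.det| * G (vecMul ω A) := by
    refine lintegral_congr_ae ?_
    filter_upwards [ae_ne_zero] with ω hω0
    have hFm : Measurable fun s : ℝ => F (vecMul ω A, s) :=
      hF.comp (measurable_const.prodMk measurable_id)
    have hFm2 : Measurable fun t : ℝ => F (vecMul ω A, (t - uu ω A) / vv ω A) :=
      hFm.comp ((measurable_id.sub_const _).div_const _)
    rw [lintegral_const_mul _ hFm2,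
      lintegral_comp_sub_div _ hFm (vv_ne_zero hA hω0), ← mul_assoc,
      ← ENNReal.ofReal_mul (div_nonneg (nsq_nonneg _) (nsq_nonneg _))]
    congr 2
    have h1 : 0 < nsq ω := nsq_pos hω0
    have h2 : 0 < nsq (vecMul ω A) := nsq_pos (vecMul_ne_zero hA hω0)
    rw [vv_eq, abs_div, abs_mul, abs_of_pos h1, abs_of_pos h2]
    field_simp
  have hGA : Measurable fun ω : Fin 2 → ℝ => G (vecMul ω A) := hG.comp hω
  rw [step1, lintegral_const_mul _ hGA, lintegral_comp_vecMul G hG hA,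
    ← mul_assoc, ← ENNReal.ofReal_mul (abs_nonneg _),
    mul_inv_cancel₀ (abs_ne_zero.2 hA), ENNReal.ofReal_one, one_mul]

lemma ae_fst_ne_zero : ∀ᵐ p : (Fin 2 → ℝ) × ℝ, p.1 ≠ 0 := by
  refine ae_iff.2 ?_
  have h1 : {p : (Fin 2 → ℝ) × ℝ | ¬ p.1 ≠ 0} = ({0} : Set (Fin 2 → ℝ)) ×ˢ (Set.univ : Set ℝ) := by
    ext ⟨ω, t⟩
    simp [Prod.ext_iff, eq_comm]
  rw [h1, MeasureTheory.Measure.volume_eq_prod, MeasureTheory.Measure.prod_prod,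
    measure_singleton, zero_mul]

lemma null_pullback (A : Matrix (Fin 2) (Fin 2) ℝ) (hA : A.det ≠ 0)
    {s : Set ((Fin 2 → ℝ) × ℝ)} (hs : MeasurableSet s) (h0 : volume s = 0) :
    ∀ᵐ p : (Fin 2 → ℝ) × ℝ, (vecMul p.1 A, (p.2 - uu p.1 A) / vv p.1 A) ∉ s := by
  have hF : Measurable (s.indicator (1 : ((Fin 2 → ℝ) × ℝ) → ℝ≥0∞)) :=
    measurable_one.indicator hs
  have hkey := key_change A hA _ hF
  rw [lintegral_indicator_one hs, h0] at hkey
  have hω := measurable_vecMulA A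
  have hT : Measurable (fun p : (Fin 2 → ℝ) × ℝ =>
      ((vecMul p.1 A, (p.2 - uu p.1 A) / vv p.1 A) : (Fin 2 → ℝ) × ℝ)) :=
    (hω.comp measurable_fst).prodMk
      ((measurable_snd.sub ((measurable_uu A).comp measurable_fst)).div
        ((measurable_vv A).comp measurable_fst))
  have hc : Measurable fun p : (Fin 2 → ℝ) × ℝ =>
      ENNReal.ofReal (nsq (vecMul p.1 A) / nsq p.1) :=
    (((measurable_nsq.comp hω).comp measurable_fst).div
      (measurable_nsq.comp measurable_fst)).ennreal_ofReal
  have h2 := (lintegral_eq_zero_iff (hc.mul (hF.comp hT))).1 hkey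
  filter_upwards [h2, ae_fst_ne_zero] with p hp hp1 hmem
  have hcp : ENNReal.ofReal (nsq (vecMul p.1 A) / nsq p.1) ≠ 0 := by
    refine (ENNReal.ofReal_pos.2 ?_).ne'
    exact div_pos (nsq_pos (vecMul_ne_zero hA hp1)) (nsq_pos hp1)
  simp only [Pi.zero_apply, Pi.mul_apply, mul_eq_zero] at hp
  rcases hp with hp | hp
  · exact hcp hp
  · simp only [Function.comp] at hp
    rw [Set.indicator_of_mem hmem] at hp
    simp at hp

/-- `ρ₂[x,A]` preserves the `L²(ℝ²×ℝ)`-norm; in particular it is a unitary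
operator on `L²(ℝ²×ℝ; ℂ)`. -/
theorem rho2_isometry (x : Fin 2 → ℝ) (A : Matrix (Fin 2) (Fin 2) ℝ)
    (hA : A.det ≠ 0) (f : (Fin 2 → ℝ) × ℝ → ℂ)
    (hf : MemLp f 2 (volume : Measure ((Fin 2 → ℝ) × ℝ))) :
    ∫⁻ p : (Fin 2 → ℝ) × ℝ, (‖rho2 x A f p‖₊ : ℝ≥0∞) ^ 2
      = ∫⁻ p : (Fin 2 → ℝ) × ℝ, (‖f p‖₊ : ℝ≥0∞) ^ 2 := by
  obtain ⟨g, hgsm, hfg⟩ := hf.1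
  have hg : Measurable g := hgsm.measurable
  -- the bad set where `f` and `g` differ
  set s : Set ((Fin 2 → ℝ) × ℝ) := toMeasurable volume {p | f p ≠ g p} with hsdef
  have hs : MeasurableSet s := measurableSet_toMeasurable _ _
  have hs0 : volume s = 0 := by
    rw [hsdef, measure_toMeasurable]
    exact hfg
  have hTs := null_pullback A hA hs hs0
  -- step 1 : replace f by g in the LHS
  have e1 : ∫⁻ p : (Fin 2 → ℝ) × ℝ, (‖rho2 x A f p‖₊ : ℝ≥0∞) ^ 2
      = ∫⁻ p : (Fin 2 → ℝ) × ℝ, (‖rho2 x A g p‖₊ : ℝ≥0∞) ^ 2 := by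
    refine lintegral_congr_ae ?_
    filter_upwards [hTs] with p hp
    have : f (vecMul p.1 A, (p.2 - uu p.1 A) / vv p.1 A)
        = g (vecMul p.1 A, (p.2 - uu p.1 A) / vv p.1 A) := by
      by_contra hne
      exact hp (subset_toMeasurable _ _ hne)
    simp only [rho2, this]
  -- step 2 : pointwise norm computation
  have e2 : ∀ p : (Fin 2 → ℝ) × ℝ, ((‖rho2 x A g p‖₊ : ℝ≥0∞)) ^ 2
      = ENNReal.ofReal (nsq (vecMul p.1 A) / nsq p.1) *
        (‖g (vecMul p.1 A, (p.2 - uu p.1 A) / vv p.1 A)‖₊ : ℝ≥0∞) ^ 2 := by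
    intro p
    have hexp : ‖Complex.exp (((2 * Real.pi * (p.1 0 * x 0 + p.1 1 * x 1)) : ℝ)
        * Complex.I)‖₊ = 1 := by
      ext
      rw [coe_nnnorm, NNReal.coe_one, Complex.norm_exp_ofReal_mul_I]
    have hr : (‖(((Real.sqrt (nsq (vecMul p.1 A)) / Real.sqrt (nsq p.1)) : ℝ) : ℂ)‖₊ : ℝ≥0∞) ^ 2
        = ENNReal.ofReal (nsq (vecMul p.1 A) / nsq p.1) := by
      rw [Complex.nnnorm_real, ← enorm_eq_nnnorm, ← ofReal_norm,
        ← ENNReal.ofReal_pow (norm_nonneg _), Real.norm_eq_abs, ← sq_abs, abs_abs, sq_abs,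
        div_pow, Real.sq_sqrt (nsq_nonneg _), Real.sq_sqrt (nsq_nonneg _)]
    rw [rho2]
    simp only [nnnorm_mul, hexp, mul_one, ENNReal.coe_mul, mul_pow, hr]
  simp_rw [e1, e2]
  rw [key_change A hA _ (hg.nnnorm.coe_nnreal_ennreal.pow_const 2)]
  refine lintegral_congr_ae ?_
  filter_upwards [hfg] with p hp
  rw [hp]
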